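/- Let I be a compact interval and h : I → h(I) a C² diffeomorphism. Then there exists a gauge function σ (continuous, increasing, σ(0)=0) such that for all distinct a,b,c,d in I, |log κ_h(a,b,c,d)| ≤ |b-a|·|σ(d-c)|. -/

import Mathlib

/-- Cross-ratio of four points. -/
noncomputable def chi (a b c d : ℝ) : ℝ := ((c - b) * (d - a)) / ((c - a) * (d - b))

/-- Distortion of the cross-ratio by a map `h`. -/
noncomputable def kappa (h : ℝ → ℝ) (a b c d : ℝ) : ℝ :=
  chi (h a) (h b) (h c) (h d) / chi a b c d

open Set intervalIntegral MeasureTheory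
open scoped Interval

set_option maxHeartbeats 1000000


lemma exists_gauge (M : ℝ → ℝ) (B : ℝ)
    (hM0 : ∀ t, 0 ≤ M t) (hMeven : ∀ t, M (-t) = M t)
    (hMmono : ∀ s t : ℝ, 0 ≤ s → s ≤ t → M s ≤ M t)
    (hMbd : ∀ t, M t ≤ B)
    (hMlim : ∀ ε > 0, ∃ δ > 0, ∀ s : ℝ, 0 ≤ s → s ≤ δ → M s ≤ ε) :
    ∃ σ : ℝ → ℝ, Continuous σ ∧ StrictMono σ ∧ σ 0 = 0 ∧ ∀ t : ℝ, t ≠ 0 → M t ≤ |σ t| := by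
  have hB0 : (0:ℝ) ≤ B := (hM0 0).trans (hMbd 0)
  have hMabs : ∀ u : ℝ, M u = M |u| := by
    intro u
    rcases le_total 0 u with hu | hu
    · rw [abs_of_nonneg hu]
    · rw [abs_of_nonpos hu, hMeven]
  -- integrability of M on every interval
  have hint : ∀ a b : ℝ, IntervalIntegrable M volume a b := by
    have h0 : ∀ c : ℝ, IntervalIntegrable M volume 0 c := by
      intro c
      rcases le_total 0 c with hc | hc
      · apply MonotoneOn.intervalIntegrable
        rw [uIcc_of_le hc]
        intro x hx y hy hxy
        exact hMmono x y hx.1 hxy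
      · apply AntitoneOn.intervalIntegrable
        rw [uIcc_of_ge hc]
        intro x hx y hy hxy
        rw [hMabs x, hMabs y]
        exact hMmono |y| |x| (abs_nonneg _)
          (by rw [abs_of_nonpos hy.2, abs_of_nonpos (hxy.trans hy.2)]; linarith)
    intro a b
    exact (h0 a).symm.trans (h0 b)
  set F : ℝ → ℝ := fun t => ∫ u in (0:ℝ)..(2*t), M u with hF
  have hFdiff : ∀ s t : ℝ, F t - F s = ∫ u in (2*s)..(2*t), M u := by
    intro s t
    have := integral_add_adjacent_intervals (hint 0 (2*s)) (hint (2*s) (2*t))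
    simp only [hF] at *
    linarith
  have hMB : ∀ (a b : ℝ) (u : ℝ), u ∈ Ι a b → ‖M u‖ ≤ B := by
    intro a b u _
    rw [Real.norm_eq_abs, abs_of_nonneg (hM0 u)]
    exact hMbd u
  have hFlip : ∀ s t : ℝ, |F t - F s| ≤ 2*B * |t - s| := by
    intro s t
    rw [hFdiff s t]
    have := intervalIntegral.norm_integral_le_of_norm_le_const (hMB (2*s) (2*t))
    rw [Real.norm_eq_abs] at this
    calc |∫ u in (2*s)..(2*t), M u| ≤ B * |2*t - 2*s| := this
    _ = 2*B*|t-s| := by rw [show (2*t - 2*s) = 2*(t-s) by ring, abs_mul]; simp [abs_of_nonneg]; ring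
  have hFcont : Continuous F := by
    apply LipschitzWith.continuous (K := Real.toNNReal (2*B))
    apply LipschitzWith.of_dist_le_mul
    intro x y
    rw [Real.dist_eq, Real.dist_eq, Real.coe_toNNReal _ (by positivity)]
    exact hFlip y x
  have hF0 : F 0 = 0 := by simp [hF]
  have hFodd : ∀ t, F (-t) = -(F t) := by
    intro t
    have h1 : ∫ u in (2*t)..(0:ℝ), M (-u) = ∫ u in (-(0:ℝ))..(-(2*t)), M u :=
      intervalIntegral.integral_comp_neg (a := 2*t) (b := 0) (f := M)
    have h2 : ∫ u in (2*t)..(0:ℝ), M (-u) = ∫ u in (2*t)..(0:ℝ), M u :=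
      intervalIntegral.integral_congr (fun u _ => hMeven u)
    have h3 : ∫ u in (2*t)..(0:ℝ), M u = -(F t) := by
      rw [hF]; rw [intervalIntegral.integral_symm]
    rw [h2, h3] at h1
    simp only [hF, neg_zero, mul_neg] at h1 ⊢
    linarith
  set σ : ℝ → ℝ := fun t => t + F t / |t| with hσ
  have hσ0 : σ 0 = 0 := by simp [hσ, hF0]
  have hσodd : ∀ t, σ (-t) = -σ t := by
    intro t
    simp only [hσ, hFodd, abs_neg, neg_div]
    ring
  have hFnn : ∀ t : ℝ, 0 ≤ t → 0 ≤ F t := by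
    intro t ht
    apply intervalIntegral.integral_nonneg (by linarith)
    exact fun u _ => hM0 u
  set J : ℝ → ℝ := fun t => ∫ s in (0:ℝ)..1, M (2*t*s) with hJ
  have hJint : ∀ t : ℝ, IntervalIntegrable (fun s => M (2*t*s)) volume 0 1 := by
    intro t
    rcases eq_or_ne t 0 with rfl | ht
    · simpa using _root_.intervalIntegrable_const (c := M 0) (a := (0:ℝ)) (b := 1)
    · have := (hint 0 (2*t*1)).comp_mul_left (c := 2*t)
      simpa [ne_eq, mul_eq_zero, ht, div_self, mul_comm] using this
  have hFJ : ∀ t : ℝ, 2*t*(J t) = F t := by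
    intro t
    have := intervalIntegral.smul_integral_comp_mul_left (f := M) (a := 0) (b := 1) (2*t)
    simpa [hJ, hF, smul_eq_mul] using this
  have hJnn : ∀ t, 0 ≤ J t := fun t =>
    intervalIntegral.integral_nonneg zero_le_one (fun u _ => hM0 _)
  have hJmono : ∀ s t : ℝ, 0 ≤ s → s ≤ t → J s ≤ J t := by
    intro s t hs hst
    apply intervalIntegral.integral_mono_on zero_le_one (hJint s) (hJint t)
    intro u hu
    exact hMmono _ _ (by nlinarith [hu.1]) (by nlinarith [hu.1])
  have hσpos : ∀ t : ℝ, 0 < t → σ t = t + 2 * J t := by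
    intro t ht
    rw [hσ]
    simp only
    rw [abs_of_pos ht, ← hFJ t]
    field_simp
  have hσmono_pos : ∀ s t : ℝ, 0 < s → s < t → σ s < σ t := by
    intro s t hs hst
    rw [hσpos s hs, hσpos t (hs.trans hst)]
    have := hJmono s t hs.le hst.le
    linarith
  have hσnn : ∀ t : ℝ, 0 ≤ t → t ≤ σ t := by
    intro t ht
    have : 0 ≤ F t / |t| := div_nonneg (hFnn t ht) (abs_nonneg t)
    simp only [hσ]; linarith
  have hσmono : StrictMono σ := by
    intro s t hst
    rcases lt_trichotomy 0 s with hs | hs | hs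
    · exact hσmono_pos s t hs hst
    · subst hs
      rw [hσ0]
      exact lt_of_lt_of_le hst (hσnn t hst.le)
    · rcases lt_trichotomy t 0 with ht | ht | ht
      · have h1 : σ s = -σ (-s) := by rw [hσodd]; ring
        have h2 : σ t = -σ (-t) := by rw [hσodd]; ring
        rw [h1, h2, neg_lt_neg_iff]
        rcases eq_or_lt_of_le (neg_nonneg.mpr ht.le) with h | h
        · rw [← h]
          rw [hσ0]
          have : 0 < -s := by linarith
          exact lt_of_lt_of_le this (hσnn _ this.le)
        · exact hσmono_pos (-t) (-s) h (by linarith)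
      · subst ht
        rw [hσ0]
        have h1 : σ s = -σ (-s) := by rw [hσodd]; ring
        rw [h1, neg_lt_zero]
        have : 0 < -s := by linarith
        exact lt_of_lt_of_le this (hσnn _ this.le)
      · have h1 : σ s = -σ (-s) := by rw [hσodd]; ring
        have h2 : 0 < σ t := lt_of_lt_of_le ht (hσnn t ht.le)
        have h3 : 0 ≤ σ (-s) := le_trans (by linarith) (hσnn (-s) (by linarith))
        rw [h1]
        linarith
  -- bound |F t| ≤ M (2|t|) * |2t|
  have hMu : ∀ t : ℝ, ∀ u ∈ Ι (0:ℝ) (2*t), M u ≤ M (2*|t|) := by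
    intro t u hu
    have habs : |u| ≤ 2*|t| := by
      rcases le_total 0 (2*t) with h | h
      · rw [Set.uIoc_of_le h] at hu
        rw [abs_of_pos hu.1]
        calc u ≤ 2*t := hu.2
        _ ≤ 2*|t| := by have := le_abs_self t; linarith
      · rw [Set.uIoc_of_ge h] at hu
        rw [abs_of_nonpos hu.2]
        have := neg_abs_le t
        linarith [hu.1]
    rw [hMabs u]
    exact hMmono _ _ (abs_nonneg u) habs
  have hFbound : ∀ t : ℝ, |F t| ≤ M (2*|t|) * (2*|t|) := by
    intro t
    have h1 : ∀ u ∈ Ι (0:ℝ) (2*t), ‖M u‖ ≤ M (2*|t|) := by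
      intro u hu
      rw [Real.norm_eq_abs, abs_of_nonneg (hM0 u)]
      exact hMu t u hu
    have := intervalIntegral.norm_integral_le_of_norm_le_const h1
    rw [Real.norm_eq_abs] at this
    calc |F t| ≤ M (2*|t|) * |2*t - 0| := this
    _ = M (2*|t|) * (2*|t|) := by rw [sub_zero, abs_mul, abs_two]
  have hσcont : Continuous σ := by
    rw [continuous_iff_continuousAt]
    intro t₀
    rcases eq_or_ne t₀ 0 with rfl | ht₀
    · rw [Metric.continuousAt_iff]
      intro ε hε
      obtain ⟨δ₁, hδ₁, hδ₁'⟩ := hMlim (ε/4) (by linarith)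
      refine ⟨min (δ₁/2) (ε/4), by positivity, ?_⟩
      intro t ht
      rw [Real.dist_eq, sub_zero] at ht
      rw [Real.dist_eq, hσ0, sub_zero]
      rcases eq_or_ne t 0 with rfl | htne
      · rw [hσ0]; simpa using hε
      · have habs : 0 < |t| := abs_pos.mpr htne
        have h2 : M (2*|t|) ≤ ε/4 := by
          apply hδ₁' _ (by positivity)
          have : |t| < δ₁/2 := lt_of_lt_of_le ht (min_le_left _ _)
          linarith
        have h3 : |F t| / |t| ≤ 2 * M (2*|t|) := by
          rw [div_le_iff₀ habs]
          calc |F t| ≤ M (2*|t|) * (2*|t|) := hFbound t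
          _ = 2 * M (2*|t|) * |t| := by ring
        have h4 : |σ t| ≤ |t| + |F t| / |t| := by
          have e : σ t = t + F t / |t| := rfl
          rw [e]
          refine (abs_add_le _ _).trans ?_
          rw [abs_div, abs_abs]
        have h5 : |t| < ε/4 := lt_of_lt_of_le ht (min_le_right _ _)
        linarith
    · exact (continuousAt_id).add ((hFcont.continuousAt).div
        (continuous_abs.continuousAt) (abs_ne_zero.mpr ht₀))
  refine ⟨σ, hσcont, hσmono, hσ0, ?_⟩
  -- M t ≤ |σ t| for t ≠ 0
  have key : ∀ t : ℝ, 0 < t → M t ≤ σ t := by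
    intro t ht
    have hsplit : F t = (∫ u in (0:ℝ)..t, M u) + ∫ u in t..(2*t), M u := by
      rw [hF]
      exact (integral_add_adjacent_intervals (hint 0 t) (hint t (2*t))).symm
    have h1 : 0 ≤ ∫ u in (0:ℝ)..t, M u :=
      intervalIntegral.integral_nonneg ht.le (fun u _ => hM0 u)
    have h2 : t * M t ≤ ∫ u in t..(2*t), M u := by
      have hconst : ∫ u in t..(2*t), M t = (2*t - t) * M t := by
        rw [intervalIntegral.integral_const, smul_eq_mul]
      have := intervalIntegral.integral_mono_on (by linarith : t ≤ 2*t)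
        (_root_.intervalIntegrable_const (c := M t)) (hint t (2*t))
        (fun u hu => hMmono t u ht.le hu.1)
      rw [hconst] at this
      calc t * M t = (2*t - t) * M t := by ring
      _ ≤ _ := this
    have hFt : t * M t ≤ F t := by linarith
    have : M t ≤ F t / t := by
      rw [le_div_iff₀ ht]
      linarith
    have hσt : σ t = t + F t / |t| := rfl
    rw [hσt, abs_of_pos ht]
    linarith
  intro t htne
  rcases lt_trichotomy 0 t with ht | ht | ht
  · have h1 : σ t > 0 := lt_of_lt_of_le ht (hσnn t ht.le)
    rw [abs_of_pos h1]
    exact key t ht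
  · exact absurd ht.symm htne
  · have h1 : σ t = -σ (-t) := by rw [hσodd]; ring
    have h2 : 0 < σ (-t) := lt_of_lt_of_le (by linarith) (hσnn (-t) (by linarith))
    rw [h1, abs_neg, abs_of_pos h2, hMabs t, abs_of_neg ht]
    exact key (-t) (by linarith)


lemma g_key (H Φ : ℝ → ℝ) (hΦc : Continuous Φ) (hH : ∀ x, HasDerivAt H (Φ x) x) (x y : ℝ) :
    H y - H x = (y - x) * ∫ t in (0:ℝ)..1, Φ (x + t*(y-x)) := by
  have hin : ∀ t : ℝ, HasDerivAt (fun t => H (x + t*(y-x))) ((y-x) * Φ (x + t*(y-x))) t := by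
    intro t
    have h1 : HasDerivAt (fun t : ℝ => x + t*(y-x)) (y-x) t := by
      simpa using ((hasDerivAt_id t).mul_const (y-x)).const_add x
    have := (hH (x + t*(y-x))).comp t h1
    simpa [mul_comm, Function.comp_def] using this
  have key := intervalIntegral.integral_eq_sub_of_hasDerivAt (f := fun t => H (x + t*(y-x)))
    (f' := fun t => (y-x) * Φ (x + t*(y-x))) (a := 0) (b := 1)
    (fun t _ => hin t)
    (Continuous.intervalIntegrable (continuous_const.mul (hΦc.comp (by continuity))) 0 1)
  rw [intervalIntegral.integral_const_mul] at key
  beta_reduce at key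
  rw [show x + 1*(y-x) = y by ring, show x + 0*(y-x) = x by ring] at key
  linarith

lemma g_cont2 (Φ : ℝ → ℝ) (hΦc : Continuous Φ) :
    Continuous (fun z : ℝ × ℝ => ∫ t in (0:ℝ)..1, Φ (z.1 + t*(z.2 - z.1))) := by
  apply intervalIntegral.continuous_parametric_intervalIntegral_of_continuous'
    (f := fun (z : ℝ×ℝ) t => Φ (z.1 + t*(z.2-z.1))) (μ := volume)
  show Continuous fun p : (ℝ×ℝ)×ℝ => Φ (p.1.1 + p.2*(p.1.2 - p.1.1))
  exact hΦc.comp (by fun_prop)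

lemma gx_cont2 (ψ : ℝ → ℝ) (hψc : Continuous ψ) :
    Continuous (fun z : ℝ × ℝ => ∫ t in (0:ℝ)..1, (1-t) * ψ (z.1 + t*(z.2 - z.1))) := by
  apply intervalIntegral.continuous_parametric_intervalIntegral_of_continuous'
    (f := fun (z : ℝ×ℝ) t => (1-t) * ψ (z.1 + t*(z.2-z.1))) (μ := volume)
  show Continuous fun p : (ℝ×ℝ)×ℝ => (1-p.2) * ψ (p.1.1 + p.2*(p.1.2 - p.1.1))
  exact (continuous_const.sub continuous_snd).mul (hψc.comp (by fun_prop))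

lemma g_deriv (Φ ψ : ℝ → ℝ) (hΦc : Continuous Φ) (hψc : Continuous ψ)
    (hΦd : ∀ x, HasDerivAt Φ (ψ x) x) (y x₀ : ℝ) :
    HasDerivAt (fun x => ∫ t in (0:ℝ)..1, Φ (x + t*(y-x)))
      (∫ t in (0:ℝ)..1, (1-t) * ψ (x₀ + t*(y-x₀))) x₀ := by
  set R : ℝ := |x₀| + |y| + 1 with hR
  have hR0 : 0 ≤ R := by positivity
  obtain ⟨C, hC⟩ := (isCompact_Icc (a := -R) (b := R)).exists_bound_of_continuousOn
    hψc.continuousOn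
  have hC0 : 0 ≤ C := le_trans (norm_nonneg (ψ 0)) (hC 0 (by constructor <;> linarith))
  have hmem : ∀ t ∈ Set.Icc (0:ℝ) 1, ∀ x ∈ Metric.ball x₀ 1,
      (x + t*(y-x)) ∈ Set.Icc (-R) R := by
    intro t ht x hx
    have hxb : |x| ≤ |x₀| + 1 := by
      have h1 : |x - x₀| < 1 := by
        have := mem_ball_iff_norm.mp hx
        rwa [Real.norm_eq_abs] at this
      have h2 := abs_sub_abs_le_abs_sub x x₀
      linarith
    have h1 : |x + t*(y-x)| ≤ (1-t)*|x| + t*|y| := by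
      rw [show x + t*(y-x) = (1-t)*x + t*y by ring]
      refine (abs_add_le _ _).trans ?_
      rw [abs_mul, abs_mul, abs_of_nonneg (by linarith [ht.2] : (0:ℝ) ≤ 1-t),
        abs_of_nonneg ht.1]
    have h2 : |x + t*(y-x)| ≤ R := by
      have e1 : (1-t)*|x| ≤ (1-t)*(|x₀|+1) := by nlinarith [ht.2]
      have e2 : t*|y| ≤ |y| := by nlinarith [abs_nonneg y, ht.1, ht.2]
      have e3 : (1-t)*(|x₀|+1) ≤ |x₀|+1 := by nlinarith [abs_nonneg x₀, ht.1]
      rw [hR]; linarith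
    exact abs_le.mp h2
  have hdiff : ∀ t ∈ Set.Icc (0:ℝ) 1, ∀ x ∈ Metric.ball x₀ 1,
      HasDerivAt (fun x => Φ (x + t*(y-x))) ((1-t) * ψ (x + t*(y-x))) x := by
    intro t _ x _
    have h1 : HasDerivAt (fun x : ℝ => (1-t)*x + t*y) (1-t) x := by
      simpa using ((hasDerivAt_id x).const_mul (1-t)).add_const (t*y)
    have h2 : HasDerivAt (fun x : ℝ => x + t*(y-x)) (1-t) x := by
      have : (fun x : ℝ => x + t*(y-x)) = fun x : ℝ => (1-t)*x + t*y := by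
        funext u; ring
      rw [this]; exact h1
    have := (hΦd (x + t*(y-x))).comp x h2
    simpa [mul_comm, Function.comp_def] using this
  have main := intervalIntegral.hasDerivAt_integral_of_dominated_loc_of_deriv_le
    (F := fun x t => Φ (x + t*(y-x))) (F' := fun x t => (1-t) * ψ (x + t*(y-x)))
    (bound := fun _ => C) (s := Metric.ball x₀ 1) (μ := volume) (a := 0) (b := 1) (x₀ := x₀)
    (Metric.ball_mem_nhds x₀ one_pos)
    (Filter.Eventually.of_forall fun x =>
      ((hΦc.comp (by continuity)).aestronglyMeasurable))
    ((hΦc.comp (by continuity)).intervalIntegrable 0 1)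
    (((continuous_const.sub continuous_id).mul
      (hψc.comp (by continuity))).aestronglyMeasurable)
    ?_ (intervalIntegrable_const) ?_
  · exact main.2
  · apply Filter.Eventually.of_forall
    intro t ht x hx
    have ht' : t ∈ Set.Icc (0:ℝ) 1 := by
      rw [Set.uIoc_of_le zero_le_one] at ht
      exact ⟨ht.1.le, ht.2⟩
    have hz := hmem t ht' x hx
    have h1 : ‖ψ (x + t*(y-x))‖ ≤ C := hC _ hz
    rw [Real.norm_eq_abs, abs_mul]
    calc |1-t| * |ψ (x + t*(y-x))| ≤ 1 * C := by
          apply mul_le_mul _ _ (abs_nonneg _) zero_le_one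
          · rw [abs_le]; constructor <;> [linarith [ht'.2]; linarith [ht'.1] ]
          · rwa [Real.norm_eq_abs] at h1
    _ = C := one_mul C
  · apply Filter.Eventually.of_forall
    intro t ht x hx
    have ht' : t ∈ Set.Icc (0:ℝ) 1 := by
      rw [Set.uIoc_of_le zero_le_one] at ht
      exact ⟨ht.1.le, ht.2⟩
    exact hdiff t ht' x hx

/-- For a C² diffeomorphism `h` of a compact interval there exists a gauge
function `σ` (continuous, increasing, `σ(0)=0`) such that
`|log κ_h(a,b,c,d)| ≤ |b-a|·|σ(d-c)|` for all distinct points `a,b,c,d`. -/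
theorem exists_gauge_bound (p q : ℝ) (hpq : p < q) (h : ℝ → ℝ)
    (hC2 : ContDiffOn ℝ 2 h (Set.Icc p q))
    (hinj : Set.InjOn h (Set.Icc p q))
    (hd : ∀ x ∈ Set.Icc p q, derivWithin h (Set.Icc p q) x ≠ 0) :
    ∃ σ : ℝ → ℝ, Continuous σ ∧ StrictMono σ ∧ σ 0 = 0 ∧
      ∀ a b c d : ℝ, a ∈ Set.Icc p q → b ∈ Set.Icc p q → c ∈ Set.Icc p q →
        d ∈ Set.Icc p q → (a ≠ b ∧ a ≠ c ∧ a ≠ d ∧ b ≠ c ∧ b ≠ d ∧ c ≠ d) →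
        |Real.log (kappa h a b c d)| ≤ |b - a| * |σ (d - c)| := by
  set I : Set ℝ := Set.Icc p q with hIdef
  have hUD : UniqueDiffOn ℝ I := uniqueDiffOn_Icc hpq
  set φ : ℝ → ℝ := derivWithin h I with hφdef
  set ψ0 : ℝ → ℝ := derivWithin φ I with hψ0def
  have hφC1 : ContDiffOn ℝ 1 φ I := hC2.derivWithin hUD (by norm_num)
  have hφcont : ContinuousOn φ I := hφC1.continuousOn
  have hψ0cont : ContinuousOn ψ0 I := hφC1.continuousOn_derivWithin hUD le_rfl
  have hhd : ∀ x ∈ I, HasDerivWithinAt h (φ x) I x := fun x hx =>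
    ((hC2.differentiableOn (by norm_num)) x hx).hasDerivWithinAt
  have hφd : ∀ x ∈ I, HasDerivWithinAt φ (ψ0 x) I x := fun x hx =>
    ((hφC1.differentiableOn one_ne_zero) x hx).hasDerivWithinAt
  -- continuous extension of ψ0 to all of ℝ
  set ψ : ℝ → ℝ := fun x => ψ0 ((Set.projIcc p q hpq.le x : ℝ)) with hψdef
  have hψc : Continuous ψ := by
    apply hψ0cont.comp_continuous (continuous_subtype_val.comp continuous_projIcc)
    exact fun x => (Set.projIcc p q hpq.le x).2
  have hψeq : ∀ x ∈ I, ψ x = ψ0 x := by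
    intro x hx
    rw [hψdef]
    simp only
    rw [Set.projIcc_of_mem hpq.le hx]
  -- primitive Φ of ψ, agreeing with φ on I
  set Φ : ℝ → ℝ := fun x => φ p + ∫ t in p..x, ψ t with hΦdef
  have hΦd : ∀ x, HasDerivAt Φ (ψ x) x := by
    intro x
    exact ((hψc.integral_hasStrictDerivAt p x).hasDerivAt).const_add (φ p)
  have hΦcont : Continuous Φ := by
    rw [continuous_iff_continuousAt]; exact fun x => (hΦd x).continuousAt
  have hpI : p ∈ I := ⟨le_rfl, hpq.le⟩
  have hΦeq : ∀ x ∈ I, Φ x = φ x := by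
    intro x hx
    have hpx : p ≤ x := hx.1
    have h1 : ∫ t in p..x, ψ t = ∫ t in p..x, ψ0 t := by
      apply intervalIntegral.integral_congr
      intro t ht
      rw [Set.uIcc_of_le hpx] at ht
      exact hψeq t ⟨ht.1, ht.2.trans hx.2⟩
    have h2 : ∫ t in p..x, ψ0 t = φ x - φ p := by
      apply intervalIntegral.integral_eq_sub_of_hasDeriv_right_of_le hpx
        (hφcont.mono (Set.Icc_subset_Icc le_rfl hx.2))
      · intro t ht
        have htI : t ∈ I := ⟨ht.1.le, ht.2.le.trans hx.2⟩
        exact (hφd t htI).mono_of_mem_nhdsWithin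
          (Icc_mem_nhdsGT_of_mem ⟨ht.1.le, lt_of_lt_of_le ht.2 hx.2⟩)
      · apply ContinuousOn.intervalIntegrable
        rw [Set.uIcc_of_le hpx]
        exact hψ0cont.mono (Set.Icc_subset_Icc le_rfl hx.2)
    rw [hΦdef]
    simp only
    rw [h1, h2]
    ring
  -- primitive H of Φ, agreeing with h on I
  set H : ℝ → ℝ := fun x => h p + ∫ t in p..x, Φ t with hHdef
  have hHd : ∀ x, HasDerivAt H (Φ x) x := by
    intro x
    exact ((hΦcont.integral_hasStrictDerivAt p x).hasDerivAt).const_add (h p)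
  have hHeq : ∀ x ∈ I, H x = h x := by
    intro x hx
    have h2 : ∫ t in p..x, Φ t = h x - h p := by
      apply intervalIntegral.integral_eq_sub_of_hasDeriv_right_of_le hx.1
        ((hC2.continuousOn).mono (Set.Icc_subset_Icc le_rfl hx.2))
      · intro t ht
        have htI : t ∈ I := ⟨ht.1.le, ht.2.le.trans hx.2⟩
        have := (hhd t htI).mono_of_mem_nhdsWithin
          (Icc_mem_nhdsGT_of_mem ⟨ht.1.le, lt_of_lt_of_le ht.2 hx.2⟩)
        rwa [← hΦeq t htI] at this
      · exact hΦcont.intervalIntegrable p x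
    rw [hHdef]
    simp only
    rw [h2]
    ring
  have hΦne : ∀ x ∈ I, Φ x ≠ 0 := fun x hx => by rw [hΦeq x hx]; exact hd x hx
  have hsign : (∀ x ∈ I, 0 < Φ x) ∨ (∀ x ∈ I, Φ x < 0) := by
    by_contra hcon
    push_neg at hcon
    obtain ⟨⟨x₁, hx₁, hx₁'⟩, ⟨x₂, hx₂, hx₂'⟩⟩ := hcon
    have hsub : Set.uIcc x₁ x₂ ⊆ I := Set.uIcc_subset_Icc hx₁ hx₂
    have hiv := intermediate_value_uIcc (hΦcont.continuousOn.mono hsub)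
    have h0 : (0:ℝ) ∈ Set.uIcc (Φ x₁) (Φ x₂) := Set.mem_uIcc.mpr (Or.inl ⟨hx₁', hx₂'⟩)
    obtain ⟨z, hz, hz0⟩ := hiv h0
    exact hΦne z (hsub hz) hz0
  have hseg : ∀ x ∈ I, ∀ y ∈ I, ∀ t ∈ Set.Icc (0:ℝ) 1, x + t*(y-x) ∈ I := by
    intro x hx y hy t ht
    have := (convex_Icc p q).add_smul_sub_mem hx hy ht
    simpa [hIdef] using this
  obtain ⟨g, gx, hgc, hgxc, hgd, hkey, hgne⟩ :
      ∃ g gx : ℝ → ℝ → ℝ, Continuous (fun z : ℝ × ℝ => g z.1 z.2) ∧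
        Continuous (fun z : ℝ × ℝ => gx z.1 z.2) ∧
        (∀ y x₀, HasDerivAt (fun x => g x y) (gx x₀ y) x₀) ∧
        (∀ x y, H y - H x = (y - x) * g x y) ∧
        (∀ x ∈ I, ∀ y ∈ I, g x y ≠ 0) := by
    refine ⟨fun x y => ∫ t in (0:ℝ)..1, Φ (x + t*(y-x)),
           fun x y => ∫ t in (0:ℝ)..1, (1-t) * ψ (x + t*(y-x)), ?_, ?_, ?_, ?_, ?_⟩
    · exact g_cont2 Φ hΦcont
    · exact gx_cont2 ψ hψc
    · exact fun y x₀ => g_deriv Φ ψ hΦcont hψc hΦd y x₀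
    · exact fun x y => g_key H Φ hΦcont hHd x y
    · intro x hx y hy
      simp only
      rcases hsign with hpos | hneg
      · have : 0 < ∫ t in (0:ℝ)..1, Φ (x + t*(y-x)) := by
          apply intervalIntegral.intervalIntegral_pos_of_pos_on
            ((hΦcont.comp (by fun_prop)).intervalIntegrable 0 1)
            (fun t ht => hpos _ (hseg x hx y hy t ⟨ht.1.le, ht.2.le⟩)) zero_lt_one
        exact this.ne'
      · have hneg2 : 0 < ∫ t in (0:ℝ)..1, -Φ (x + t*(y-x)) := by
          apply intervalIntegral.intervalIntegral_pos_of_pos_on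
            (((hΦcont.comp (by fun_prop)).neg).intervalIntegrable 0 1)
            (fun t ht => by simpa using hneg _ (hseg x hx y hy t ⟨ht.1.le, ht.2.le⟩)) zero_lt_one
        rw [intervalIntegral.integral_neg] at hneg2
        have : (∫ t in (0:ℝ)..1, Φ (x + t*(y-x))) < 0 := by linarith
        exact this.ne
  set Q : ℝ → ℝ → ℝ := fun x y => gx x y / g x y with hQdef
  have hQcont : ContinuousOn (fun z : ℝ × ℝ => Q z.1 z.2) (I ×ˢ I) := by
    apply ContinuousOn.div
    · exact hgxc.continuousOn
    · exact hgc.continuousOn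
    · exact fun z hz => hgne z.1 hz.1 z.2 hz.2
  have hKcomp : IsCompact (I ×ˢ I) := (isCompact_Icc).prod (isCompact_Icc)
  obtain ⟨B, hB⟩ := hKcomp.exists_bound_of_continuousOn hQcont
  have hppI : ((p, p) : ℝ × ℝ) ∈ I ×ˢ I := ⟨hpI, hpI⟩
  have hB0 : 0 ≤ B := le_trans (norm_nonneg _) (hB (p,p) hppI)
  have hUC := hKcomp.uniformContinuousOn_of_continuous hQcont
  rw [Metric.uniformContinuousOn_iff] at hUC
  set S : ℝ → Set ℝ := fun t =>
    {r : ℝ | ∃ x ∈ I, ∃ c ∈ I, ∃ d ∈ I, |d - c| ≤ |t| ∧ r = |Q x c - Q x d|} with hSdef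
  set M : ℝ → ℝ := fun t => sSup (S t) with hMdef
  have hmem0 : ∀ t, (0:ℝ) ∈ S t := fun t =>
    ⟨p, hpI, p, hpI, p, hpI, by simp, by simp⟩
  have hbdd : ∀ t, ∀ r ∈ S t, r ≤ 2*B := by
    rintro t r ⟨x, hx, c, hc, d, hdI, hle, rfl⟩
    have h1 : |Q x c| ≤ B := by
      have := hB (x,c) ⟨hx, hc⟩
      rwa [Real.norm_eq_abs] at this
    have h2 : |Q x d| ≤ B := by
      have := hB (x,d) ⟨hx, hdI⟩
      rwa [Real.norm_eq_abs] at this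
    calc |Q x c - Q x d| ≤ |Q x c| + |Q x d| := abs_sub _ _
    _ ≤ 2*B := by linarith
  have hBdd : ∀ t, BddAbove (S t) := fun t => ⟨2*B, fun r hr => hbdd t r hr⟩
  have hM0 : ∀ t, 0 ≤ M t := fun t => le_csSup (hBdd t) (hmem0 t)
  have hMeven : ∀ t, M (-t) = M t := by
    intro t
    rw [hMdef]
    simp only [hSdef, abs_neg]
  have hMmono : ∀ s t : ℝ, 0 ≤ s → s ≤ t → M s ≤ M t := by
    intro s t hs hst
    apply csSup_le_csSup (hBdd t) ⟨0, hmem0 s⟩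
    rintro r ⟨x, hx, c, hc, d, hdI, hle, rfl⟩
    refine ⟨x, hx, c, hc, d, hdI, hle.trans ?_, rfl⟩
    rw [abs_of_nonneg hs, abs_of_nonneg (hs.trans hst)]
    exact hst
  have hMbd : ∀ t, M t ≤ 2*B := fun t =>
    Real.sSup_le (fun r hr => hbdd t r hr) (by positivity)
  have hMlim : ∀ ε > 0, ∃ δ > 0, ∀ s : ℝ, 0 ≤ s → s ≤ δ → M s ≤ ε := by
    intro ε hε
    obtain ⟨δ, hδ, hδ'⟩ := hUC (ε/2) (by linarith)
    refine ⟨δ/2, by linarith, ?_⟩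
    intro s hs hsδ
    apply Real.sSup_le _ hε.le
    rintro r ⟨x, hx, c, hc, d, hdI, hle, rfl⟩
    have h1 : |c - d| < δ := by
      rw [abs_sub_comm]
      have : |d - c| ≤ s := by rwa [abs_of_nonneg hs] at hle
      linarith
    have hdist : dist ((x,c) : ℝ×ℝ) ((x,d) : ℝ×ℝ) < δ := by
      rw [Prod.dist_eq, Real.dist_eq, Real.dist_eq, sub_self, abs_zero]
      exact max_lt hδ h1
    have := hδ' (x,c) ⟨hx,hc⟩ (x,d) ⟨hx,hdI⟩ hdist
    rw [Real.dist_eq] at this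
    have : |Q x c - Q x d| < ε/2 := this
    linarith
  have hQM : ∀ x ∈ I, ∀ c ∈ I, ∀ d ∈ I, |Q x c - Q x d| ≤ M (d - c) := by
    intro x hx c hc d hdI
    exact le_csSup (hBdd _) ⟨x, hx, c, hc, d, hdI, le_rfl, rfl⟩
  obtain ⟨σ, hσc, hσm, hσ0, hσM⟩ := exists_gauge M (2*B) hM0 hMeven hMmono hMbd hMlim
  refine ⟨σ, hσc, hσm, hσ0, ?_⟩
  rintro a b c d ha hb hc hdI ⟨hab, hac, had, hbc, hbd, hcd⟩
  have hQy : ∀ y ∈ I, ContinuousOn (fun x => Q x y) I := by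
    intro y hy
    have hline : Continuous (fun x : ℝ => ((x, y) : ℝ × ℝ)) := by fun_prop
    exact hQcont.comp hline.continuousOn (fun x hx => ⟨hx, hy⟩)
  have hsubab : Set.uIcc a b ⊆ I := Set.uIcc_subset_Icc ha hb
  have hintc : IntervalIntegrable (fun x => Q x c) volume a b := by
    apply ContinuousOn.intervalIntegrable
    exact (hQy c hc).mono hsubab
  have hintd : IntervalIntegrable (fun x => Q x d) volume a b := by
    apply ContinuousOn.intervalIntegrable
    exact (hQy d hdI).mono hsubab
  have hFTC : ∀ y ∈ I, (IntervalIntegrable (fun x => Q x y) volume a b) →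
      Real.log (g b y) - Real.log (g a y) = ∫ x in a..b, Q x y := by
    intro y hy hint
    have hderiv : ∀ x ∈ Set.uIcc a b, HasDerivAt (fun x => Real.log (g x y)) (Q x y) x := by
      intro x hxm
      exact (hgd y x).log (hgne x (hsubab hxm) y hy)
    rw [intervalIntegral.integral_eq_sub_of_hasDerivAt hderiv hint]
  have hgbc := hgne b hb c hc
  have hgad := hgne a ha d hdI
  have hgac := hgne a ha c hc
  have hgbd := hgne b hb d hdI
  have hcb : c - b ≠ 0 := sub_ne_zero.mpr (Ne.symm hbc)
  have hda : d - a ≠ 0 := sub_ne_zero.mpr (Ne.symm had)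
  have hca : c - a ≠ 0 := sub_ne_zero.mpr (Ne.symm hac)
  have hdb : d - b ≠ 0 := sub_ne_zero.mpr (Ne.symm hbd)
  have hchi : kappa h a b c d = (g b c * g a d) / (g a c * g b d) := by
    have e1 : h c - h b = (c - b) * g b c := by
      rw [← hHeq c hc, ← hHeq b hb]; exact hkey b c
    have e2 : h d - h a = (d - a) * g a d := by
      rw [← hHeq d hdI, ← hHeq a ha]; exact hkey a d
    have e3 : h c - h a = (c - a) * g a c := by
      rw [← hHeq c hc, ← hHeq a ha]; exact hkey a c
    have e4 : h d - h b = (d - b) * g b d := by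
      rw [← hHeq d hdI, ← hHeq b hb]; exact hkey b d
    rw [kappa, chi, chi, show h c - h b = (c-b) * g b c from e1,
      show h d - h a = (d-a) * g a d from e2, show h c - h a = (c-a) * g a c from e3,
      show h d - h b = (d-b) * g b d from e4]
    field_simp
  have hlog : Real.log (kappa h a b c d) = ∫ x in a..b, (Q x c - Q x d) := by
    rw [hchi, Real.log_div (mul_ne_zero hgbc hgad) (mul_ne_zero hgac hgbd),
      Real.log_mul hgbc hgad, Real.log_mul hgac hgbd,
      intervalIntegral.integral_sub hintc hintd]
    have h1 := hFTC c hc hintc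
    have h2 := hFTC d hdI hintd
    linarith
  have hbound : ∀ x ∈ Set.uIoc a b, ‖Q x c - Q x d‖ ≤ M (d - c) := by
    intro x hx
    have hxI : x ∈ I := hsubab (Set.uIoc_subset_uIcc hx)
    rw [Real.norm_eq_abs]
    exact hQM x hxI c hc d hdI
  have hfinal := intervalIntegral.norm_integral_le_of_norm_le_const hbound
  rw [Real.norm_eq_abs, ← hlog] at hfinal
  have hMσ : M (d - c) ≤ |σ (d - c)| := hσM (d - c) (sub_ne_zero.mpr (Ne.symm hcd))
  calc |Real.log (kappa h a b c d)| ≤ M (d-c) * |b-a| := hfinal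
  _ ≤ |σ (d-c)| * |b-a| := mul_le_mul_of_nonneg_right hMσ (abs_nonneg _)
  _ = |b-a| * |σ (d-c)| := mul_comm _ _
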